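/- Define δ(m) = lim_{N→∞} (1/N) ∑_{n=1}^N χ^{(4n-3)}(m)/m^{2n-3/2}, where χ^{(k)}(m) = (1/2)∑_{a²+ab+2b²=m} ε_{a,b}(a+bη)^k with ε_{a,b} = ((a³-2a²b-ab²+b³)/7) the Legendre symbol mod 7 and η=(1+√(-7))/2. Then δ(m) = 0 unless m is a perfect square, and δ(m²') for m a square equals the Legendre symbol (√m / 7); in particular for a prime p ≠ 7, δ(p²) = (p/7) and δ(p^{2k}) = (p/7)^k. -/

import Mathlib

open Complex Filter

instance : Fact (Nat.Prime 7) := ⟨by norm_num⟩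

noncomputable def eta7 : ℂ := (1 + Complex.I * Real.sqrt 7) / 2

/-- `χ^{(k)}(m) = (1/2) ∑_{a²+ab+2b²=m} ε_{a,b} (a+bη)^k` where
`ε_{a,b}` is the Legendre symbol of `a³-2a²b-ab²+b³` mod 7. -/
noncomputable def chi7 (k : ℕ) (m : ℕ) : ℂ :=
  (1 / 2) * ∑ p ∈ (Finset.Icc (-(m : ℤ)) m ×ˢ Finset.Icc (-(m : ℤ)) m).filter
      (fun p => p.1 ^ 2 + p.1 * p.2 + 2 * p.2 ^ 2 = (m : ℤ)),
    (legendreSym 7 (p.1 ^ 3 - 2 * p.1 ^ 2 * p.2 - p.1 * p.2 ^ 2 + p.2 ^ 3) : ℂ) *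
      ((p.1 : ℂ) + (p.2 : ℂ) * eta7) ^ k

/-- The average `δ(m) = lim_N (1/N) ∑_{n≤N} χ^{(4n-3)}(m)/m^{2n-3/2}`. -/
noncomputable def deltaAvg (m : ℕ) : ℕ → ℂ := fun N =>
  (N : ℂ)⁻¹ * ∑ n ∈ Finset.Icc 1 N, chi7 (4 * n - 3) m / (m : ℂ) ^ ((2 * (n : ℂ)) - 3 / 2)

/- ## Auxiliary definitions -/

noncomputable def Sset (m : ℕ) : Finset (ℤ × ℤ) :=
  (Finset.Icc (-(m : ℤ)) m ×ˢ Finset.Icc (-(m : ℤ)) m).filter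
      (fun p => p.1 ^ 2 + p.1 * p.2 + 2 * p.2 ^ 2 = (m : ℤ))

noncomputable def zc (p : ℤ × ℤ) : ℂ := (p.1 : ℂ) + (p.2 : ℂ) * eta7

noncomputable def uc (m : ℕ) (p : ℤ × ℤ) : ℂ := zc p / (Real.sqrt m : ℂ)

def eps (p : ℤ × ℤ) : ℤ :=
  legendreSym 7 (p.1 ^ 3 - 2 * p.1 ^ 2 * p.2 - p.1 * p.2 ^ 2 + p.2 ^ 3)

noncomputable def limval (m : ℕ) : ℂ :=
  ∑ p ∈ Sset m, ((1 / 2 : ℂ) * (eps p : ℂ) * uc m p) * (if (uc m p) ^ 4 = 1 then 1 else 0)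

lemma chi7_eq (k m : ℕ) :
    chi7 k m = (1 / 2 : ℂ) * ∑ p ∈ Sset m, (eps p : ℂ) * zc p ^ k := rfl

lemma eta7_re : eta7.re = 1 / 2 := by
  simp [eta7, Complex.div_re]

lemma eta7_im : eta7.im = Real.sqrt 7 / 2 := by
  simp [eta7, Complex.div_im]

lemma zc_re (p : ℤ × ℤ) : (zc p).re = ((2 * p.1 + p.2 : ℤ) : ℝ) / 2 := by
  simp [zc, eta7_re, eta7_im]
  push_cast
  ring

lemma zc_im (p : ℤ × ℤ) : (zc p).im = (p.2 : ℝ) * Real.sqrt 7 / 2 := by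
  simp [zc, eta7_re, eta7_im]
  ring

lemma normSq_zc (p : ℤ × ℤ) :
    Complex.normSq (zc p) = ((p.1 ^ 2 + p.1 * p.2 + 2 * p.2 ^ 2 : ℤ) : ℝ) := by
  have h7 : Real.sqrt 7 ^ 2 = 7 := Real.sq_sqrt (by norm_num)
  rw [Complex.normSq_apply, zc_re, zc_im]
  push_cast
  nlinarith [h7]

lemma abs_zc {m : ℕ} {p : ℤ × ℤ} (hp : p ∈ Sset m) :
    ‖zc p‖ = Real.sqrt m := by
  have hmem := (Finset.mem_filter.mp hp).2
  rw [Complex.norm_def, normSq_zc, hmem]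
  push_cast
  rfl

lemma abs_uc {m : ℕ} (hm : 0 < m) {p : ℤ × ℤ} (hp : p ∈ Sset m) :
    ‖uc m p‖ = 1 := by
  have hs : (0:ℝ) < Real.sqrt m := Real.sqrt_pos.mpr (by exact_mod_cast hm)
  rw [uc, norm_div, abs_zc hp]
  simp [Complex.norm_real, abs_of_pos hs, div_self (ne_of_gt hs)]

/- ## Cesàro averages -/

lemma cesaro_one :
    Tendsto (fun N : ℕ => (N : ℂ)⁻¹ * ∑ n ∈ Finset.Icc 1 N, (1 : ℂ) ^ (n - 1))
      atTop (nhds 1) := by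
  have h : ∀ᶠ N : ℕ in atTop,
      (1 : ℂ) = (N : ℂ)⁻¹ * ∑ n ∈ Finset.Icc 1 N, (1 : ℂ) ^ (n - 1) := by
    filter_upwards [eventually_ge_atTop 1] with N hN
    have hN0 : (N : ℂ) ≠ 0 := Nat.cast_ne_zero.mpr (by omega)
    simp [Nat.card_Icc, inv_mul_cancel₀ hN0]
  exact Tendsto.congr' h tendsto_const_nhds

lemma cesaro_ne {v : ℂ} (hv : ‖v‖ = 1) (h1 : v ≠ 1) :
    Tendsto (fun N : ℕ => (N : ℂ)⁻¹ * ∑ n ∈ Finset.Icc 1 N, v ^ (n - 1))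
      atTop (nhds 0) := by
  have hbound : ∀ N : ℕ, ‖(N : ℂ)⁻¹ * ∑ n ∈ Finset.Icc 1 N, v ^ (n - 1)‖
      ≤ (2 / ‖v - 1‖) * (1 / (N : ℝ)) := by
    intro N
    have hsum : ∑ n ∈ Finset.Icc 1 N, v ^ (n - 1) = (v ^ N - 1) / (v - 1) := by
      rw [show Finset.Icc 1 N = Finset.Ico 1 (N + 1) by rfl,
        Finset.sum_Ico_eq_sum_range]
      simp only [Nat.add_sub_cancel, Nat.add_sub_cancel_left]
      exact geom_sum_eq h1 N
    rw [hsum, norm_mul, norm_inv, norm_div]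
    have h2 : ‖v ^ N - 1‖ ≤ 2 := by
      calc ‖v ^ N - 1‖ ≤ ‖v ^ N‖ + ‖(1 : ℂ)‖ := norm_sub_le _ _
        _ = 2 := by norm_num [norm_pow, hv]
    have hv1 : (0 : ℝ) < ‖v - 1‖ := by
      simp [norm_pos_iff, sub_ne_zero.mpr h1]
    rw [Complex.norm_natCast]
    rw [show (2 / ‖v - 1‖) * (1 / (N:ℝ)) = (N:ℝ)⁻¹ * (2 / ‖v - 1‖) by
      ring]
    gcongr
  refine squeeze_zero_norm hbound ?_
  have := (tendsto_one_div_atTop_nhds_zero_nat (𝕜 := ℝ)).const_mul (2 / ‖v - 1‖)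
  simpa using this

/- ## Rewriting deltaAvg -/

lemma pow_term {m : ℕ} (hm : 0 < m) {p : ℤ × ℤ} (hp : p ∈ Sset m) {n : ℕ} (hn : 1 ≤ n) :
    zc p ^ (4 * n - 3) / (m : ℂ) ^ ((2 * (n : ℂ)) - 3 / 2)
      = ((uc m p) ^ 4) ^ (n - 1) * uc m p := by
  have hs0 : (0:ℝ) < Real.sqrt m := Real.sqrt_pos.mpr (by exact_mod_cast hm)
  have key : (m : ℂ) ^ ((2 * (n : ℂ)) - 3 / 2) = ((Real.sqrt m : ℂ)) ^ (4 * n - 3) := by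
    have h1 : (2 * (n : ℂ)) - 3 / 2 = (((2 * (n:ℝ) - 3 / 2 : ℝ)) : ℂ) := by push_cast; ring
    rw [h1, ← Complex.ofReal_natCast m, ← Complex.ofReal_cpow (Nat.cast_nonneg m),
      ← Complex.ofReal_pow]
    congr 1
    have hm' : (m : ℝ) = Real.sqrt m ^ (2:ℕ) := (Real.sq_sqrt (Nat.cast_nonneg m)).symm
    rw [← Real.rpow_natCast (Real.sqrt m) (4 * n - 3)]
    conv_lhs => rw [hm', ← Real.rpow_natCast (Real.sqrt m) 2, ← Real.rpow_mul hs0.le]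
    congr 1
    have h3 : ((4 * n - 3 : ℕ) : ℝ) = 4 * (n:ℝ) - 3 := by
      have h4 : (3:ℕ) ≤ 4 * n := by omega
      push_cast [Nat.cast_sub h4]
      ring
    rw [h3]; push_cast; ring
  rw [key, show uc m p = zc p / (Real.sqrt m : ℂ) from rfl, ← pow_mul, ← pow_succ,
    show 4 * (n - 1) + 1 = 4 * n - 3 by omega, div_pow]

lemma deltaAvg_eq {m : ℕ} (hm : 0 < m) (N : ℕ) :
    deltaAvg m N = ∑ p ∈ Sset m, ((1 / 2 : ℂ) * (eps p : ℂ) * uc m p) *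
      ((N : ℂ)⁻¹ * ∑ n ∈ Finset.Icc 1 N, ((uc m p) ^ 4) ^ (n - 1)) := by
  have step1 : ∀ n ∈ Finset.Icc 1 N, chi7 (4 * n - 3) m / (m : ℂ) ^ ((2 * (n : ℂ)) - 3 / 2)
      = ∑ p ∈ Sset m, ((1 / 2 : ℂ) * (eps p : ℂ)) * (((uc m p) ^ 4) ^ (n - 1) * uc m p) := by
    intro n hn
    have hn1 : 1 ≤ n := (Finset.mem_Icc.mp hn).1
    rw [chi7_eq, div_eq_mul_inv, mul_assoc, Finset.sum_mul, Finset.mul_sum]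
    refine Finset.sum_congr rfl (fun p hp => ?_)
    rw [mul_assoc, ← div_eq_mul_inv, pow_term hm hp hn1]
    ring
  unfold deltaAvg
  rw [Finset.sum_congr rfl step1, Finset.sum_comm, Finset.mul_sum]
  refine Finset.sum_congr rfl (fun p hp => ?_)
  have h2 : ∑ n ∈ Finset.Icc 1 N, ((1 / 2 : ℂ) * (eps p : ℂ)) * (((uc m p) ^ 4) ^ (n - 1) * uc m p)
      = ((1 / 2 : ℂ) * (eps p : ℂ) * uc m p) * ∑ n ∈ Finset.Icc 1 N, ((uc m p) ^ 4) ^ (n - 1) := by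
    rw [Finset.mul_sum]
    exact Finset.sum_congr rfl (fun n _ => by ring)
  rw [h2]
  ring

lemma tendsto_limval {m : ℕ} (hm : 0 < m) :
    Tendsto (deltaAvg m) atTop (nhds (limval m)) := by
  have h := tendsto_finset_sum (Sset m)
    (f := fun p (N : ℕ) => ((1 / 2 : ℂ) * (eps p : ℂ) * uc m p) *
      ((N : ℂ)⁻¹ * ∑ n ∈ Finset.Icc 1 N, ((uc m p) ^ 4) ^ (n - 1)))
    (a := fun p => ((1 / 2 : ℂ) * (eps p : ℂ) * uc m p) * (if (uc m p) ^ 4 = 1 then 1 else 0))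
    (fun p hp => by
      by_cases h4 : (uc m p) ^ 4 = 1
      · rw [if_pos h4, h4]
        exact cesaro_one.const_mul _
      · rw [if_neg h4]
        have habs : ‖(uc m p) ^ 4‖ = 1 := by
          rw [norm_pow, abs_uc hm hp]; norm_num
        simpa using (cesaro_ne habs h4).const_mul ((1 / 2 : ℂ) * (eps p : ℂ) * uc m p))
  exact Tendsto.congr (fun N => (deltaAvg_eq hm N).symm) h

/- ## Number-theoretic facts -/

lemma seven_mul_sq {c b : ℤ} (h : c ^ 2 = 7 * b ^ 2) : b = 0 := by
  by_contra hb
  have hC : c.natAbs ^ 2 = 7 * b.natAbs ^ 2 := by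
    have := congrArg Int.natAbs h
    simpa [Int.natAbs_mul, Int.natAbs_pow] using this
  have hB : b.natAbs ≠ 0 := Int.natAbs_ne_zero.mpr hb
  have h1 : (c.natAbs ^ 2).factorization 7 = (7 * b.natAbs ^ 2).factorization 7 := by rw [hC]
  rw [Nat.factorization_pow, Nat.factorization_mul (by norm_num) (pow_ne_zero 2 hB),
    Nat.factorization_pow] at h1
  simp only [Finsupp.smul_apply, Finsupp.coe_add, Pi.add_apply, smul_eq_mul,
    Nat.Prime.factorization_self (by norm_num : Nat.Prime 7)] at h1
  omega

lemma u4_eq_one {m : ℕ} (hm : 0 < m) {p : ℤ × ℤ} (hp : p ∈ Sset m)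
    (h : (uc m p) ^ 4 = 1) : p.2 = 0 ∨ 2 * p.1 + p.2 = 0 := by
  have hs0 : (0:ℝ) < Real.sqrt m := Real.sqrt_pos.mpr (by exact_mod_cast hm)
  have hs0' : ((Real.sqrt m : ℝ) : ℂ) ≠ 0 := by exact_mod_cast ne_of_gt hs0
  have hz4 : zc p ^ 4 = ((Real.sqrt m : ℝ) : ℂ) ^ 4 := by
    have := h
    rw [uc, div_pow, div_eq_one_iff_eq (pow_ne_zero 4 hs0')] at this
    exact this
  have him : (zc p ^ 4).im = 0 := by
    rw [hz4, ← Complex.ofReal_pow]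
    exact Complex.ofReal_im _
  have expand : (zc p ^ 4).im
      = 4 * (zc p).re * (zc p).im * ((zc p).re ^ 2 - (zc p).im ^ 2) := by
    rw [show (4:ℕ) = 2 * 2 from rfl, pow_mul]
    simp only [pow_two, Complex.mul_im, Complex.mul_re]
    ring
  rw [expand, zc_re, zc_im] at him
  have h7 : Real.sqrt 7 ^ 2 = 7 := Real.sq_sqrt (by norm_num)
  have h7pos : (0:ℝ) < Real.sqrt 7 := Real.sqrt_pos.mpr (by norm_num)
  have key : ∀ A B : ℝ,
      4 * (A / 2) * (B * Real.sqrt 7 / 2) * ((A / 2) ^ 2 - (B * Real.sqrt 7 / 2) ^ 2) = 0 →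
      A * B * (A ^ 2 - 7 * B ^ 2) = 0 := by
    intro A B hE
    have h1 : A * B * (A ^ 2 - 7 * B ^ 2) * Real.sqrt 7 = 0 := by
      linear_combination 4 * hE + A * B ^ 3 * Real.sqrt 7 * h7
    rcases mul_eq_zero.mp h1 with h' | h'
    · exact h'
    · exact absurd h' (ne_of_gt h7pos)
  have hprod2 := key _ _ him
  rcases mul_eq_zero.mp hprod2 with h' | h'
  · rcases mul_eq_zero.mp h' with h'' | h''
    · right
      exact_mod_cast h''
    · left
      exact_mod_cast h''
  · have hZ : (2 * p.1 + p.2) ^ 2 = 7 * p.2 ^ 2 := by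
      have h'' := sub_eq_zero.mp h'
      exact_mod_cast h''
    left
    exact seven_mul_sq hZ

lemma eps_zero_of_diag {p : ℤ × ℤ} (h : 2 * p.1 + p.2 = 0) : eps p = 0 := by
  have hb : p.2 = -(2 * p.1) := by omega
  unfold eps
  rw [legendreSym.eq_zero_iff]
  have harg : p.1 ^ 3 - 2 * p.1 ^ 2 * p.2 - p.1 * p.2 ^ 2 + p.2 ^ 3 = -7 * p.1 ^ 3 := by
    rw [hb]; ring
  rw [harg]
  push_cast
  rw [show ((-7 : ZMod 7)) = 0 by decide, zero_mul]

lemma sq_of_b_eq_zero {m : ℕ} {p : ℤ × ℤ} (hp : p ∈ Sset m) (hb : p.2 = 0) :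
    p.1 ^ 2 = (m : ℤ) := by
  have hmem := (Finset.mem_filter.mp hp).2
  rw [hb] at hmem
  simpa using hmem

lemma limval_nonsquare {m : ℕ} (hm : 0 < m) (h : ¬ IsSquare m) : limval m = 0 := by
  unfold limval
  refine Finset.sum_eq_zero (fun p hp => ?_)
  by_cases h4 : (uc m p) ^ 4 = 1
  · rcases u4_eq_one hm hp h4 with hb | hd
    · refine absurd ⟨p.1.natAbs, ?_⟩ h
      have h1 := sq_of_b_eq_zero hp hb
      have h2 : ((p.1.natAbs : ℤ)) * p.1.natAbs = (m : ℤ) := by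
        rw [Int.natAbs_mul_self']
        linear_combination h1
      exact_mod_cast h2.symm
    · rw [eps_zero_of_diag hd]
      simp
  · rw [if_neg h4, mul_zero]

lemma leg_pow (a : ℤ) (k : ℕ) : legendreSym 7 (a ^ k) = legendreSym 7 a ^ k := by
  induction k with
  | zero => simpa using (by decide : legendreSym 7 1 = 1)
  | succ j ih => rw [pow_succ, legendreSym.mul, ih, pow_succ]

lemma leg_cube (a : ℤ) : legendreSym 7 (a ^ 3) = legendreSym 7 a := by
  rw [leg_pow]
  by_cases h : (a : ZMod 7) = 0
  · rw [(legendreSym.eq_zero_iff 7 a).mpr h]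
    ring
  · have := legendreSym.sq_one (p := 7) (a := a) h
    calc legendreSym 7 a ^ 3 = legendreSym 7 a ^ 2 * legendreSym 7 a := by ring
      _ = legendreSym 7 a := by rw [this, one_mul]

lemma leg_neg (a : ℤ) : legendreSym 7 (-a) = - legendreSym 7 a := by
  rw [show -a = -1 * a by ring, legendreSym.mul,
    show legendreSym 7 (-1) = -1 by decide]
  ring

lemma limval_square {m : ℕ} (hm : 0 < m) (h : IsSquare m) :
    limval m = (legendreSym 7 (Nat.sqrt m) : ℂ) := by
  obtain ⟨t, ht⟩ := h
  have hsqrt : Nat.sqrt m = t := by rw [ht, Nat.sqrt_eq]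
  have htpos : 0 < t := by
    rcases Nat.eq_zero_or_pos t with h0 | h0
    · rw [h0] at ht; simp at ht; omega
    · exact h0
  have hmt : (m : ℝ) = (t : ℝ) ^ 2 := by rw [ht]; push_cast; ring
  have hs : Real.sqrt m = (t : ℝ) := by
    rw [hmt, Real.sqrt_sq (by positivity)]
  set P1 : ℤ × ℤ := ((t : ℤ), 0) with hP1
  set P2 : ℤ × ℤ := (-(t : ℤ), 0) with hP2
  have htm : (t : ℤ) ≤ (m : ℤ) := by
    have : t ≤ m := by rw [ht]; nlinarith
    exact_mod_cast this
  have hm0 : (0:ℤ) ≤ (m:ℤ) := Int.ofNat_nonneg m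
  have ht0 : (0:ℤ) ≤ (t:ℤ) := Int.ofNat_nonneg t
  have hmemgen : ∀ a : ℤ, -(m:ℤ) ≤ a → a ≤ (m:ℤ) → a ^ 2 = (m:ℤ) →
      ((a, 0) : ℤ × ℤ) ∈ Sset m := by
    intro a h1 h2 h3
    have h0 : (0:ℤ) ∈ Finset.Icc (-(m:ℤ)) (m:ℤ) := Finset.mem_Icc.mpr ⟨by linarith, hm0⟩
    have ha : a ∈ Finset.Icc (-(m:ℤ)) (m:ℤ) := Finset.mem_Icc.mpr ⟨h1, h2⟩
    rw [Sset, Finset.mem_filter, Finset.mem_product]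
    exact ⟨⟨ha, h0⟩, by simpa using h3⟩
  have htsq : ((t:ℤ)) ^ 2 = (m:ℤ) := by push_cast [ht]; ring
  have hmem1 : P1 ∈ Sset m := hmemgen t (by linarith) htm htsq
  have hmem2 : P2 ∈ Sset m := hmemgen (-(t:ℤ)) (by linarith) (by linarith)
    (by linear_combination htsq)
  have hne : P1 ≠ P2 := by
    intro hcon
    have hcon1 : (t : ℤ) = -(t : ℤ) := congrArg Prod.fst hcon
    omega
  have hsub : ({P1, P2} : Finset (ℤ × ℤ)) ⊆ Sset m := by
    intro x hx
    rcases Finset.mem_insert.mp hx with h' | h'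
    · rw [h']; exact hmem1
    · rw [Finset.mem_singleton.mp h']; exact hmem2
  have hzero : ∀ p ∈ Sset m, p ∉ ({P1, P2} : Finset (ℤ × ℤ)) →
      ((1 / 2 : ℂ) * (eps p : ℂ) * uc m p) * (if (uc m p) ^ 4 = 1 then 1 else 0) = 0 := by
    intro p hp hnp
    by_cases h4 : (uc m p) ^ 4 = 1
    · rcases u4_eq_one hm hp h4 with hb | hd
      · exfalso
        have hsq : p.1 ^ 2 = ((t : ℤ)) ^ 2 := by
          rw [sq_of_b_eq_zero hp hb]
          push_cast [ht]; ring
        have hfac : (p.1 - t) * (p.1 + t) = 0 := by linear_combination hsq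
        apply hnp
        rcases mul_eq_zero.mp hfac with h' | h'
        · apply Finset.mem_insert.mpr; left
          have : p.1 = (t : ℤ) := by omega
          exact Prod.ext this hb
        · apply Finset.mem_insert.mpr; right
          apply Finset.mem_singleton.mpr
          have : p.1 = -(t : ℤ) := by omega
          exact Prod.ext this hb
      · rw [eps_zero_of_diag hd]
        simp
    · rw [if_neg h4, mul_zero]
  have hu1 : uc m P1 = 1 := by
    rw [uc, hs, zc]
    simp only [hP1]
    push_cast
    simp only [mul_zero, zero_mul, add_zero]
    rw [div_self (by exact_mod_cast Nat.cast_ne_zero.mpr (by omega : t ≠ 0))]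
  have hu2 : uc m P2 = -1 := by
    rw [uc, hs, zc]
    simp only [hP2]
    push_cast
    rw [zero_mul, add_zero, neg_div,
      div_self (by exact_mod_cast Nat.cast_ne_zero.mpr (by omega : t ≠ 0))]
  have heps1 : eps P1 = legendreSym 7 (t : ℤ) := by
    unfold eps
    simp only [hP1]
    rw [show ((t:ℤ)) ^ 3 - 2 * (t:ℤ) ^ 2 * 0 - (t:ℤ) * 0 ^ 2 + 0 ^ 3 = (t:ℤ) ^ 3 by ring]
    exact leg_cube _
  have heps2 : eps P2 = - legendreSym 7 (t : ℤ) := by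
    unfold eps
    simp only [hP2]
    rw [show (-(t:ℤ)) ^ 3 - 2 * (-(t:ℤ)) ^ 2 * 0 - (-(t:ℤ)) * 0 ^ 2 + 0 ^ 3 = -((t:ℤ) ^ 3) by ring]
    rw [leg_neg, leg_cube]
  unfold limval
  rw [← Finset.sum_subset hsub hzero, Finset.sum_pair hne, hu1, hu2, heps1, heps2, hsqrt]
  rw [if_pos (show ((1:ℂ)) ^ 4 = 1 by norm_num), if_pos (show ((-1:ℂ)) ^ 4 = 1 by norm_num)]
  push_cast
  ring

theorem delta_multiplicative_values :
    (∀ m : ℕ, 0 < m → ¬ IsSquare m → Tendsto (deltaAvg m) atTop (nhds 0)) ∧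
    (∀ m : ℕ, 0 < m → IsSquare m →
      Tendsto (deltaAvg m) atTop (nhds (legendreSym 7 (Nat.sqrt m) : ℂ))) ∧
    (∀ p : ℕ, p.Prime → p ≠ 7 →
      Tendsto (deltaAvg (p ^ 2)) atTop (nhds (legendreSym 7 p : ℂ)) ∧
      ∀ k : ℕ, 1 ≤ k →
        Tendsto (deltaAvg (p ^ (2 * k))) atTop (nhds ((legendreSym 7 p : ℂ) ^ k))) := by
  refine ⟨fun m hm h => ?_, fun m hm h => ?_, fun p hp hp7 => ?_⟩
  · rw [← limval_nonsquare hm h]; exact tendsto_limval hm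
  · rw [← limval_square hm h]; exact tendsto_limval hm
  · have hgen : ∀ k : ℕ, 1 ≤ k → Tendsto (deltaAvg (p ^ (2 * k))) atTop
        (nhds ((legendreSym 7 p : ℂ) ^ k)) := by
      intro k hk
      have hpos : 0 < p ^ (2 * k) := pow_pos hp.pos _
      have hsq : IsSquare (p ^ (2 * k)) := ⟨p ^ k, by rw [← pow_add]; congr 1; omega⟩
      have hsqrt : Nat.sqrt (p ^ (2 * k)) = p ^ k := by
        rw [show 2 * k = k * 2 by ring, pow_mul, sq, Nat.sqrt_eq]
      have hlim := tendsto_limval hpos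
      rw [limval_square hpos hsq, hsqrt] at hlim
      have hleg : (legendreSym 7 ((p ^ k : ℕ) : ℤ) : ℂ) = (legendreSym 7 (p : ℕ) : ℂ) ^ k := by
        rw [show ((p ^ k : ℕ) : ℤ) = ((p : ℕ) : ℤ) ^ k by push_cast; ring, leg_pow]
        push_cast
        ring
      rwa [hleg] at hlim
    refine ⟨?_, hgen⟩
    have h1 := hgen 1 le_rfl
    simpa using h1
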